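/- arXiv:hep-lat/9604010 — 2 statements merged into one kernel-verified Lean document; each statement's English description precedes it below -/
import Mathlib

section
/- Let M be a complex-valued function on finite subsets of Z^d with M({x}) = 0 for all singletons, and suppose there exist α > 0 such that for every site y, Σ_{P : y ∈ P, |P| ≥ 2} |M(P)|·exp(α|P|) ≤ α/2. Then for every finite admissible collection P = {P₁,…,P_k} of pairwise disjoint finite sets, Σ_{P' ∈ Conn(P), P' ≠ ∅} exp(α‖P'‖)·|M|^{P'} ≤ (1/2)·exp(α‖P‖), where Conn(P) is the set of admissible collections P' = {P'₁,…,P'ₙ} of pairwise disjoint sets each of which intersects ∪ᵢPᵢ, ‖P‖ := Σᵢ |Pᵢ|, and |M|^{P'} := ∏ⱼ |M(P'ⱼ)|. -/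
open scoped ENNReal

lemma my_tsum_option {β : Type*} (g : Option β → ℝ≥0∞) :
    ∑' o : Option β, g o = g none + ∑' b : β, g (some b) := by
  classical
  rw [ENNReal.tsum_eq_add_tsum_ite none]
  congr 1
  refine (((Option.some_injective β).tsum_eq ?_).symm).trans (tsum_congr fun b => by simp)
  rintro (_ | b) ho
  · simp at ho
  · exact ⟨b, rfl⟩

lemma my_tsum_pi_fin {β : Type*} : ∀ (n : ℕ) (g : Fin n → β → ℝ≥0∞),
    ∑' f : Fin n → β, ∏ i, g i (f i) = ∏ i, ∑' b, g i b := by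
  intro n
  induction n with
  | zero =>
    intro g
    rw [tsum_eq_single (fun i => i.elim0) (fun f hf => absurd (Subsingleton.elim f _) hf)]
    simp
  | succ n ih =>
    intro g
    rw [← (Fin.consEquiv (fun _ : Fin (n + 1) => β)).tsum_eq, ENNReal.tsum_prod']
    have hterm : ∀ (a : β) (f : Fin n → β),
        (∏ i, g i (Fin.consEquiv (fun _ : Fin (n+1) => β) (a, f) i))
          = g 0 a * ∏ i : Fin n, g i.succ (f i) := by
      intro a f
      rw [Fin.prod_univ_succ]
      simp [Fin.consEquiv]
    calc ∑' (a : β) (f : Fin n → β), ∏ i, g i (Fin.consEquiv (fun _ : Fin (n+1) => β) (a, f) i)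
        = ∑' (a : β) (f : Fin n → β), g 0 a * ∏ i : Fin n, g i.succ (f i) :=
          tsum_congr fun a => tsum_congr fun f => hterm a f
      _ = (∑' a : β, g 0 a) * ∑' f : Fin n → β, ∏ i : Fin n, g i.succ (f i) := by
          rw [← ENNReal.tsum_mul_right]
          exact tsum_congr fun a => ENNReal.tsum_mul_left
      _ = (∑' a : β, g 0 a) * ∏ i : Fin n, ∑' b, g i.succ b := by rw [ih]
      _ = ∏ i, ∑' b, g i b := by rw [Fin.prod_univ_succ]

lemma my_tsum_pi_fintype {ι β : Type*} [Fintype ι] (g : ι → β → ℝ≥0∞) :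
    ∑' f : ι → β, ∏ i, g i (f i) = ∏ i, ∑' b, g i b := by
  classical
  obtain e := Fintype.equivFin ι
  set E := (Equiv.arrowCongr e (Equiv.refl β)).symm with hE
  calc ∑' f : ι → β, ∏ i, g i (f i)
      = ∑' c : Fin (Fintype.card ι) → β, ∏ i : ι, g i (E c i) :=
        (E.tsum_eq (fun fn => ∏ i, g i (fn i))).symm
    _ = ∑' c : Fin (Fintype.card ι) → β, ∏ j, g (e.symm j) (c j) := by
        refine tsum_congr fun c => ?_
        refine Fintype.prod_equiv e _ _ fun i => ?_
        simp [hE, Equiv.arrowCongr]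
    _ = ∏ j, ∑' b, g (e.symm j) b := my_tsum_pi_fin _ _
    _ = ∏ i : ι, ∑' b, g i b := by
        refine (Fintype.prod_equiv e _ _ fun i => ?_).symm
        simp

/-- An admissible collection: a finite set of pairwise disjoint nonempty finite
subsets of the lattice. -/
def Admissible {α : Type*} (C : Finset (Finset α)) : Prop :=
  (∀ Q ∈ C, Q.Nonempty) ∧ ∀ Q ∈ C, ∀ R ∈ C, Q ≠ R → Disjoint Q R

/-- Key estimate for the Mayer–Montroll expansion: if
`Σ_{P ∋ y, |P| ≥ 2} |M(P)| e^{α|P|} ≤ α/2` for every site `y` (and `M` vanishes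
on singletons), then for every admissible collection `𝒫`,
`Σ_{∅ ≠ 𝒫' ∈ Conn(𝒫)} e^{α‖𝒫'‖} |M|^{𝒫'} ≤ (1/2) e^{α‖𝒫‖}`. -/
theorem stmt14 (d : ℕ) (M : Finset (Fin d → ℤ) → ℂ) (α : ℝ) (hα : 0 < α)
    (hM1 : ∀ x : Fin d → ℤ, M {x} = 0)
    (hM : ∀ y : Fin d → ℤ,
      ∑' P : {P : Finset (Fin d → ℤ) // y ∈ P ∧ 2 ≤ P.card},
          ENNReal.ofReal (‖M P.1‖ * Real.exp (α * P.1.card)) ≤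
        ENNReal.ofReal (α / 2))
    (Pc : Finset (Finset (Fin d → ℤ))) (hPc : Admissible Pc) :
    ∑' C' : {C : Finset (Finset (Fin d → ℤ)) //
        Admissible C ∧ C.Nonempty ∧ ∀ Q ∈ C, ¬ Disjoint Q (Pc.sup id)},
        ENNReal.ofReal (Real.exp (α * ∑ Q ∈ C'.1, (Q.card : ℝ))) *
          ∏ Q ∈ C'.1, ENNReal.ofReal (‖M Q‖) ≤
      (1 / 2) * ENNReal.ofReal (Real.exp (α * ∑ Q ∈ Pc, (Q.card : ℝ))) := by
  classical
  set Λ : Finset (Fin d → ℤ) := Pc.sup id with hΛ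
  set v : Finset (Fin d → ℤ) → ℝ≥0∞ :=
    fun Q => ENNReal.ofReal (‖M Q‖ * Real.exp (α * Q.card)) with hv
  -- the summand equals a product of `v`
  have hsummand : ∀ C : Finset (Finset (Fin d → ℤ)),
      ENNReal.ofReal (Real.exp (α * ∑ Q ∈ C, (Q.card : ℝ))) *
        ∏ Q ∈ C, ENNReal.ofReal (‖M Q‖) = ∏ Q ∈ C, v Q := by
    intro C
    rw [Finset.mul_sum, Real.exp_sum,
      ENNReal.ofReal_prod_of_nonneg (fun _ _ => (Real.exp_pos _).le),
      ← Finset.prod_mul_distrib]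
    refine Finset.prod_congr rfl fun Q _ => ?_
    simp only [hv]
    rw [ENNReal.ofReal_mul (norm_nonneg _), mul_comm]
  -- `v` vanishes on singletons
  have hv1 : ∀ Q : Finset (Fin d → ℤ), Q.card = 1 → v Q = 0 := by
    intro Q hQ
    obtain ⟨x, rfl⟩ := Finset.card_eq_one.mp hQ
    simp [hv, hM1]
  -- a choice function
  have hpkaux : ∀ s : Finset (Fin d → ℤ), ∃ x, s.Nonempty → x ∈ s := by
    intro s
    by_cases h : s.Nonempty
    · exact ⟨h.choose, fun _ => h.choose_spec⟩
    · exact ⟨fun _ => 0, fun hs => absurd hs h⟩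
  choose pk hpk using hpkaux
  have hpkmem : ∀ (Q : Finset (Fin d → ℤ)), ¬ Disjoint Q Λ → pk (Q ∩ Λ) ∈ Q ∩ Λ := by
    intro Q hQ
    obtain ⟨a, ha1, ha2⟩ := Finset.not_disjoint_iff.mp hQ
    exact hpk _ ⟨a, Finset.mem_inter.mpr ⟨ha1, ha2⟩⟩
  -- the encoding map
  set Ψ : Finset (Finset (Fin d → ℤ)) → (Fin d → ℤ) → Option (Finset (Fin d → ℤ)) :=
    fun C y => if h : (C.filter (fun Q => pk (Q ∩ Λ) = y)).Nonempty then some h.choose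
      else none with hΨ
  have hΨ2 : ∀ C y Q, Ψ C y = some Q → Q ∈ C ∧ pk (Q ∩ Λ) = y := by
    intro C y Q h
    simp only [hΨ] at h
    by_cases hne : (C.filter (fun Q => pk (Q ∩ Λ) = y)).Nonempty
    · rw [dif_pos hne] at h
      have := hne.choose_spec
      rw [Option.some_inj.mp h] at this
      exact Finset.mem_filter.mp this
    · rw [dif_neg hne] at h
      exact absurd h (by simp)
  have hΨ1 : ∀ C, Admissible C → (∀ Q ∈ C, ¬ Disjoint Q Λ) →
      ∀ Q ∈ C, Ψ C (pk (Q ∩ Λ)) = some Q := by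
    intro C hAd hInt Q hQ
    have hfil : Q ∈ C.filter (fun R => pk (R ∩ Λ) = pk (Q ∩ Λ)) :=
      Finset.mem_filter.mpr ⟨hQ, rfl⟩
    have hne : (C.filter (fun R => pk (R ∩ Λ) = pk (Q ∩ Λ))).Nonempty := ⟨Q, hfil⟩
    rw [hΨ]
    simp only [dif_pos hne]
    congr 1
    have hmem := hne.choose_spec
    rw [Finset.mem_filter] at hmem
    by_contra hne'
    have hdisj := hAd.2 _ hmem.1 Q hQ hne'
    have h1 : pk (Q ∩ Λ) ∈ Q := (Finset.mem_inter.mp (hpkmem Q (hInt Q hQ))).1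
    have h2 : pk (Q ∩ Λ) ∈ hne.choose := by
      have := (Finset.mem_inter.mp (hpkmem _ (hInt _ hmem.1))).1
      rwa [hmem.2] at this
    exact (Finset.disjoint_left.mp hdisj h2) h1
  -- the subtype and map into functions
  set T := {C : Finset (Finset (Fin d → ℤ)) //
      Admissible C ∧ C.Nonempty ∧ ∀ Q ∈ C, ¬ Disjoint Q Λ} with hT
  set Φ : T → ({x // x ∈ Λ} → Option (Finset (Fin d → ℤ))) :=
    fun C' y => Ψ C'.1 y.1 with hΦ
  have hmemΛ : ∀ (C' : T), ∀ Q ∈ C'.1, pk (Q ∩ Λ) ∈ Λ := fun C' Q hQ =>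
    (Finset.mem_inter.mp (hpkmem Q (C'.2.2.2 Q hQ))).2
  have hkey : ∀ (A B : T), Φ A = Φ B → ∀ Q ∈ A.1, Q ∈ B.1 := by
    intro A B h Q hQ
    have h1 : Ψ A.1 (pk (Q ∩ Λ)) = some Q := hΨ1 A.1 A.2.1 A.2.2.2 Q hQ
    have h2 := congrFun h ⟨pk (Q ∩ Λ), hmemΛ A Q hQ⟩
    rw [hΦ] at h2
    simp only at h2
    rw [h1] at h2
    exact (hΨ2 B.1 _ _ h2.symm).1
  have hΦinj : Function.Injective Φ := by
    intro A B h
    exact Subtype.ext (Finset.ext fun Q => ⟨hkey A B h Q, hkey B A h.symm Q⟩)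
  -- pointwise weights
  set u : (Fin d → ℤ) → Finset (Fin d → ℤ) → ℝ≥0∞ :=
    fun y Q => if y ∈ Q ∧ 2 ≤ Q.card then v Q else 0 with hu
  set g : (Fin d → ℤ) → Option (Finset (Fin d → ℤ)) → ℝ≥0∞ :=
    fun y o => o.elim 1 (u y) with hg
  -- product identity
  have hprod : ∀ C' : T, (∏ Q ∈ C'.1, v Q) = ∏ y : {x // x ∈ Λ}, g y.1 (Φ C' y) := by
    rintro ⟨C, hAd, hNe, hInt⟩
    have hstep1 : (∏ y : {x // x ∈ Λ}, g y.1 (Φ ⟨C, hAd, hNe, hInt⟩ y))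
        = ∏ y ∈ Λ, g y (Ψ C y) := Finset.prod_coe_sort Λ (fun y => g y (Ψ C y))
    rw [hstep1]
    have hSsub : C.image (fun Q => pk (Q ∩ Λ)) ⊆ Λ := by
      intro y hy
      obtain ⟨Q, hQ, rfl⟩ := Finset.mem_image.mp hy
      exact (Finset.mem_inter.mp (hpkmem Q (hInt Q hQ))).2
    have houtside : ∀ y ∈ Λ, y ∉ C.image (fun Q => pk (Q ∩ Λ)) → g y (Ψ C y) = 1 := by
      intro y _ hyS
      rcases hpsi : Ψ C y with _ | Q
      · rfl
      · obtain ⟨hQC, hpkQ⟩ := hΨ2 C y Q hpsi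
        exact absurd (Finset.mem_image.mpr ⟨Q, hQC, hpkQ⟩) hyS
    rw [← Finset.prod_subset hSsub houtside]
    have hinjOn : ∀ Q ∈ C, ∀ R ∈ C, pk (Q ∩ Λ) = pk (R ∩ Λ) → Q = R := by
      intro Q hQ R hR hpkeq
      by_contra hne'
      have hdisj := hAd.2 Q hQ R hR hne'
      have h1 : pk (Q ∩ Λ) ∈ Q := (Finset.mem_inter.mp (hpkmem Q (hInt Q hQ))).1
      have h2 : pk (Q ∩ Λ) ∈ R := by
        have := (Finset.mem_inter.mp (hpkmem R (hInt R hR))).1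
        rwa [← hpkeq] at this
      exact (Finset.disjoint_left.mp hdisj h1) h2
    rw [Finset.prod_image hinjOn]
    refine Finset.prod_congr rfl fun Q hQ => ?_
    rw [hΨ1 C hAd hInt Q hQ]
    have hyQ : pk (Q ∩ Λ) ∈ Q := (Finset.mem_inter.mp (hpkmem Q (hInt Q hQ))).1
    by_cases hc : 2 ≤ Q.card
    · simp [hg, hu, hyQ, hc]
    · have hcard : Q.card = 1 := by
        have := Finset.card_pos.mpr (hAd.1 Q hQ)
        omega
      simp [hg, hu, hv1 Q hcard]
  -- extend Φ to Option T
  set Φ' : Option T → ({x // x ∈ Λ} → Option (Finset (Fin d → ℤ))) :=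
    fun o => o.elim (fun _ => none) Φ with hΦ'
  have hΦne : ∀ C' : T, Φ C' ≠ fun _ => none := by
    intro C' h
    obtain ⟨Q, hQ⟩ := C'.2.2.1
    have h1 : Ψ C'.1 (pk (Q ∩ Λ)) = some Q := hΨ1 C'.1 C'.2.1 C'.2.2.2 Q hQ
    have h2 := congrFun h ⟨pk (Q ∩ Λ), hmemΛ C' Q hQ⟩
    rw [hΦ] at h2
    simp only at h2
    rw [h1] at h2
    exact Option.some_ne_none Q h2
  have hΦ'inj : Function.Injective Φ' := by
    rintro (_ | A) (_ | B) h
    · rfl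
    · exact absurd h.symm (hΦne B)
    · exact absurd h (hΦne A)
    · exact congrArg some (hΦinj h)
  -- the total weight function
  set W : ({x // x ∈ Λ} → Option (Finset (Fin d → ℤ))) → ℝ≥0∞ :=
    fun f => ∏ y : {x // x ∈ Λ}, g y.1 (f y) with hW
  -- cardinality of Λ
  have hΛcard : (Λ.card : ℝ) = ∑ Q ∈ Pc, (Q.card : ℝ) := by
    have hcb : (Pc.biUnion id).card = ∑ Q ∈ Pc, (id Q).card :=
      Finset.card_biUnion (fun Q hQ R hR hne => hPc.2 Q hQ R hR hne)
    rw [hΛ, Finset.sup_eq_biUnion, hcb]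
    push_cast
    simp
  -- per-site bound
  have hsite : ∀ y : {x // x ∈ Λ}, (∑' o : Option (Finset (Fin d → ℤ)), g y.1 o)
      ≤ ENNReal.ofReal (1 + α / 2) := by
    intro y
    rw [my_tsum_option]
    have h1 : (∑' Q : Finset (Fin d → ℤ), u y.1 Q) ≤ ENNReal.ofReal (α / 2) := by
      have h2 : (∑' Q : Finset (Fin d → ℤ), u y.1 Q)
          = ∑' P : {P : Finset (Fin d → ℤ) | y.1 ∈ P ∧ 2 ≤ P.card}, v P.1 := by
        rw [tsum_subtype]
        refine tsum_congr fun Q => ?_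
        by_cases hc : y.1 ∈ Q ∧ 2 ≤ Q.card
        · simp [hu, Set.indicator_apply, hc]
        · simp [hu, Set.indicator_apply, hc]
      rw [h2]
      exact hM y.1
    calc g y.1 none + ∑' Q, g y.1 (some Q) = 1 + ∑' Q, u y.1 Q := rfl
      _ ≤ 1 + ENNReal.ofReal (α / 2) := add_le_add_right h1 1
      _ = ENNReal.ofReal (1 + α / 2) := by
          rw [ENNReal.ofReal_add zero_le_one (by positivity), ENNReal.ofReal_one]
  -- bound on total sum
  have htotal : (∑' f : {x // x ∈ Λ} → Option (Finset (Fin d → ℤ)), W f)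
      ≤ ENNReal.ofReal ((1 + α / 2) ^ Λ.card) := by
    rw [hW, my_tsum_pi_fintype]
    calc (∏ y : {x // x ∈ Λ}, ∑' o, g y.1 o)
        ≤ ∏ _y : {x // x ∈ Λ}, ENNReal.ofReal (1 + α / 2) :=
          Finset.prod_le_prod' fun y _ => hsite y
      _ = ENNReal.ofReal (1 + α / 2) ^ Λ.card := by
          rw [Finset.prod_const, Finset.card_univ, Fintype.card_coe]
      _ = ENNReal.ofReal ((1 + α / 2) ^ Λ.card) :=
          (ENNReal.ofReal_pow (by positivity) _).symm
  -- the real-number inequality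
  have hreal : (1 + α / 2) ^ Λ.card ≤ 1 + Real.exp (α * Λ.card) / 2 := by
    set n := Λ.card
    have h2 : (1 + α / 2) ≤ Real.exp (α / 2) := by
      have := Real.add_one_le_exp (α / 2)
      linarith
    have h3 : (1 + α / 2) ^ n ≤ Real.exp (α / 2) ^ n :=
      pow_le_pow_left₀ (by positivity) h2 n
    have h4 : Real.exp (α / 2) ^ n = Real.exp ((n : ℝ) * (α / 2)) :=
      (Real.exp_nat_mul _ n).symm
    set t := Real.exp ((n : ℝ) * (α / 2)) with ht
    have h5 : t ^ 2 = Real.exp (α * n) := by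
      rw [ht, sq, ← Real.exp_add]
      congr 1
      ring
    have h6 : t ≤ 1 + t ^ 2 / 2 := by nlinarith [sq_nonneg (t - 1)]
    calc (1 + α / 2) ^ n ≤ t := h4 ▸ h3
      _ ≤ 1 + t ^ 2 / 2 := h6
      _ = 1 + Real.exp (α * n) / 2 := by rw [h5]
  -- assemble
  have hmain : 1 + (∑' C' : T, ∏ Q ∈ C'.1, v Q)
      ≤ 1 + (1 / 2) * ENNReal.ofReal (Real.exp (α * ∑ Q ∈ Pc, (Q.card : ℝ))) := by
    calc 1 + (∑' C' : T, ∏ Q ∈ C'.1, v Q)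
        = W (fun _ => none) + ∑' C' : T, W (Φ C') := by
          congr 1
          · rw [hW]; simp [hg]
          · exact tsum_congr fun C' => hprod C'
      _ = ∑' o : Option T, W (Φ' o) := by
          rw [my_tsum_option (fun o => W (Φ' o))]
          rfl
      _ ≤ ∑' f : {x // x ∈ Λ} → Option (Finset (Fin d → ℤ)), W f :=
          ENNReal.tsum_comp_le_tsum_of_injective hΦ'inj W
      _ ≤ ENNReal.ofReal ((1 + α / 2) ^ Λ.card) := htotal
      _ ≤ ENNReal.ofReal (1 + Real.exp (α * Λ.card) / 2) := ENNReal.ofReal_le_ofReal hreal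
      _ = 1 + (1 / 2) * ENNReal.ofReal (Real.exp (α * Λ.card)) := by
          rw [ENNReal.ofReal_add zero_le_one (by positivity), ENNReal.ofReal_one,
            ENNReal.ofReal_div_of_pos two_pos, ENNReal.ofReal_ofNat]
          congr 1
          rw [ENNReal.div_eq_inv_mul, one_div]
      _ = 1 + (1 / 2) * ENNReal.ofReal (Real.exp (α * ∑ Q ∈ Pc, (Q.card : ℝ))) := by
          rw [hΛcard]
  have hfinal := (ENNReal.add_le_add_iff_left ENNReal.one_ne_top).mp hmain
  calc ∑' C' : T, ENNReal.ofReal (Real.exp (α * ∑ Q ∈ C'.1, (Q.card : ℝ))) *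
          ∏ Q ∈ C'.1, ENNReal.ofReal (‖M Q‖)
      = ∑' C' : T, ∏ Q ∈ C'.1, v Q := tsum_congr fun C' => hsummand C'.1
    _ ≤ (1 / 2) * ENNReal.ofReal (Real.exp (α * ∑ Q ∈ Pc, (Q.card : ℝ))) := hfinal
end

section
/- Fix α > 0 and a function f on finite subsets of Z^d with values in [0,∞). Suppose that for each admissible collection P (finite set of pairwise disjoint nonempty finite subsets of Z^d), Σ_{∅ ≠ P' ∈ Conn(P)} exp(α‖P'‖)·f^{P'} ≤ (1/2)·exp(α‖P‖). Then for every finite set Q and every n ≥ 0, Σ over chains P₁,…,Pₙ with P₁ ∈ Conn({ {x} : x ∈ Q }) and Pᵢ ∈ Conn(P_{i−1}) for i ≥ 2 of ∏ᵢ f^{Pᵢ} is bounded by 2^{−n}·exp(α|Q|), and hence the series Σ_{n≥0} of these sums converges and is bounded by 2·exp(α|Q|). -/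
open scoped ENNReal

/-- `c` is a chain `P₁, …, Pₙ` of nonempty admissible collections with
`P₁ ∈ Conn({{x} : x ∈ Q})` and `Pᵢ ∈ Conn(P_{i−1})` for `i ≥ 2`: every member of
`c i` meets the union of the previous collection (resp. meets `Q` for `i = 0`). -/
def IsChain' {α : Type*} [DecidableEq α] (Q : Finset α) {n : ℕ} (c : Fin n → Finset (Finset α)) : Prop :=
  (∀ i, Admissible (c i) ∧ (c i).Nonempty) ∧
  ∀ i : Fin n, ∀ P ∈ c i,
    ¬ Disjoint P (if h : 0 < (i : ℕ) then
        (c ⟨(i : ℕ) - 1, Nat.lt_of_le_of_lt (Nat.sub_le _ _) i.isLt⟩).sup id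
      else Q)

-- auxiliary lemmas
lemma chain_succ_iff {β : Type*} [DecidableEq β] {n : ℕ} (S : Finset β)
    (c : Fin (n+1) → Finset (Finset β)) :
    IsChain' S c ↔
      ((Admissible (c 0) ∧ (c 0).Nonempty ∧ ∀ R ∈ c 0, ¬ Disjoint R S) ∧
        IsChain' ((c 0).sup id) (fun i => c i.succ)) := by
  have anchor1 : ∀ i : Fin n,
      (if h : 0 < ((i.succ : Fin (n+1)) : ℕ) then
        (c ⟨((i.succ : Fin (n+1)) : ℕ) - 1,
            Nat.lt_of_le_of_lt (Nat.sub_le _ _) (i.succ).isLt⟩).sup id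
      else S) = (c ⟨(i : ℕ), i.isLt.trans (Nat.lt_succ_self n)⟩).sup id := by
    intro i
    rw [dif_pos (by simp : 0 < ((i.succ : Fin (n+1)) : ℕ))]
    have he : (⟨((i.succ : Fin (n+1)) : ℕ) - 1,
        Nat.lt_of_le_of_lt (Nat.sub_le _ _) (i.succ).isLt⟩ : Fin (n+1))
        = ⟨(i : ℕ), i.isLt.trans (Nat.lt_succ_self n)⟩ := Fin.ext (by simp)
    rw [he]
  have anchor2 : ∀ i : Fin n,
      (if h : 0 < (i : ℕ) then
        ((fun j : Fin n => c j.succ) ⟨(i : ℕ) - 1,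
            Nat.lt_of_le_of_lt (Nat.sub_le _ _) i.isLt⟩).sup id
      else (c 0).sup id) = (c ⟨(i : ℕ), i.isLt.trans (Nat.lt_succ_self n)⟩).sup id := by
    intro i
    rcases Nat.eq_zero_or_pos (i : ℕ) with h0 | h0
    · rw [dif_neg (by omega)]
      congr 2
      exact Fin.ext (by simp [h0])
    · rw [dif_pos h0]
      show (c (Fin.succ ⟨(i:ℕ)-1, _⟩)).sup id = _
      congr 2
      exact Fin.ext (by simp [Fin.val_succ]; omega)
  constructor
  · rintro ⟨h1, h2⟩
    refine ⟨⟨(h1 0).1, (h1 0).2, fun R hR => by simpa using h2 0 R hR⟩,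
      fun i => h1 i.succ, fun i P hP => ?_⟩
    have := h2 i.succ P hP
    rw [anchor1 i] at this
    rw [anchor2 i]
    exact this
  · rintro ⟨⟨ha, hne, hconn⟩, h1, h2⟩
    refine ⟨fun i => ?_, fun i P hP => ?_⟩
    · rcases Nat.eq_zero_or_pos (i : ℕ) with h0 | h0
      · have : i = 0 := Fin.ext h0
        subst this; exact ⟨ha, hne⟩
      · have : i = (⟨(i:ℕ)-1, by omega⟩ : Fin n).succ := Fin.ext (by simp; omega)
        rw [this]; exact h1 _
    · rcases Nat.eq_zero_or_pos (i : ℕ) with h0 | h0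
      · have hi : i = 0 := Fin.ext h0
        subst hi
        rw [dif_neg (by simp)]
        exact hconn P hP
      · rw [dif_pos h0]
        have hj : (Fin.succ (⟨(i:ℕ)-1, by omega⟩ : Fin n) : Fin (n+1)) = i :=
          Fin.ext (by simp; omega)
        have hP' : P ∈ c (Fin.succ ⟨(i:ℕ)-1, by omega⟩) := by rw [hj]; exact hP
        have := h2 ⟨(i:ℕ)-1, by omega⟩ P hP'
        rw [anchor2] at this
        exact this

def chainEquiv {β : Type*} [DecidableEq β] {n : ℕ} (S : Finset β) :
    {c : Fin (n+1) → Finset (Finset β) // IsChain' S c} ≃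
    Σ C : {C : Finset (Finset β) // Admissible C ∧ C.Nonempty ∧ ∀ R ∈ C, ¬ Disjoint R S},
      {c : Fin n → Finset (Finset β) // IsChain' (C.1.sup id) c} where
  toFun c := ⟨⟨c.1 0, ((chain_succ_iff S c.1).1 c.2).1⟩,
    ⟨fun i => c.1 i.succ, ((chain_succ_iff S c.1).1 c.2).2⟩⟩
  invFun p := ⟨Fin.cons p.1.1 p.2.1, (chain_succ_iff S _).2 (by
    simpa [Fin.cons_zero, Fin.cons_succ] using ⟨p.1.2, p.2.2⟩)⟩
  left_inv c := Subtype.ext (funext (Fin.cases rfl (fun i => rfl)))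
  right_inv p := rfl

lemma key_lemma (d : ℕ) (α : ℝ) (hα : 0 < α) (f : Finset (Fin d → ℤ) → ℝ≥0∞)
    (hf : ∀ P : Finset (Finset (Fin d → ℤ)), Admissible P →
      ∑' C : {C : Finset (Finset (Fin d → ℤ)) //
          Admissible C ∧ C.Nonempty ∧ ∀ R ∈ C, ¬ Disjoint R (P.sup id)},
          ENNReal.ofReal (Real.exp (α * ∑ R ∈ C.1, (R.card : ℝ))) *
            ∏ R ∈ C.1, f R ≤
        (1 / 2) * ENNReal.ofReal (Real.exp (α * ∑ R ∈ P, (R.card : ℝ)))) :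
    ∀ n : ℕ, ∀ P : Finset (Finset (Fin d → ℤ)), Admissible P →
      ∑' c : {c : Fin n → Finset (Finset (Fin d → ℤ)) // IsChain' (P.sup id) c},
          ∏ i, ∏ R ∈ c.1 i, f R ≤
        ((2 : ℝ≥0∞)⁻¹) ^ n * ENNReal.ofReal (Real.exp (α * ∑ R ∈ P, (R.card : ℝ))) := by
  intro n
  induction n with
  | zero =>
    intro P hP
    have h1 : IsChain' (P.sup id) (fun _ : Fin 0 => (∅ : Finset (Finset (Fin d → ℤ)))) := by
      exact ⟨fun i => i.elim0, fun i => i.elim0⟩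
    haveI : Unique {c : Fin 0 → Finset (Finset (Fin d → ℤ)) // IsChain' (P.sup id) c} :=
      ⟨⟨⟨_, h1⟩⟩, fun c => Subtype.ext (funext fun i => i.elim0)⟩
    rw [tsum_eq_single default (fun b hb => absurd (Subsingleton.elim b default) hb)]
    simp only [Finset.univ_eq_empty, Finset.prod_empty, pow_zero, one_mul]
    rw [ENNReal.one_le_ofReal]
    refine Real.one_le_exp ?_
    apply mul_nonneg hα.le
    exact Finset.sum_nonneg fun R _ => by positivity
  | succ n ih =>
    intro P hP
    rw [← Equiv.tsum_eq (chainEquiv (P.sup id)).symm]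
    rw [ENNReal.tsum_sigma']
    have step1 : ∀ C : {C : Finset (Finset (Fin d → ℤ)) //
          Admissible C ∧ C.Nonempty ∧ ∀ R ∈ C, ¬ Disjoint R (P.sup id)},
        ∑' c : {c : Fin n → Finset (Finset (Fin d → ℤ)) // IsChain' (C.1.sup id) c},
          (∏ i, ∏ R ∈ (((chainEquiv (P.sup id)).symm ⟨C, c⟩).1 : Fin (n+1) →
              Finset (Finset (Fin d → ℤ))) i, f R)
        ≤ (∏ R ∈ C.1, f R) *
            ((2 : ℝ≥0∞)⁻¹) ^ n * ENNReal.ofReal (Real.exp (α * ∑ R ∈ C.1, (R.card : ℝ))) := by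
      intro C
      have heq : ∀ c : {c : Fin n → Finset (Finset (Fin d → ℤ)) // IsChain' (C.1.sup id) c},
          (∏ i, ∏ R ∈ (((chainEquiv (P.sup id)).symm ⟨C, c⟩).1 : Fin (n+1) →
              Finset (Finset (Fin d → ℤ))) i, f R)
          = (∏ R ∈ C.1, f R) * ∏ i, ∏ R ∈ c.1 i, f R := by
        intro c
        show (∏ i, ∏ R ∈ (Fin.cons C.1 c.1 : Fin (n+1) → _) i, f R) = _
        rw [Fin.prod_univ_succ]
        simp [Fin.cons_zero, Fin.cons_succ]
      calc _ = ∑' c : {c : Fin n → Finset (Finset (Fin d → ℤ)) // IsChain' (C.1.sup id) c},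
            (∏ R ∈ C.1, f R) * ∏ i, ∏ R ∈ c.1 i, f R := by
              exact tsum_congr heq
        _ = (∏ R ∈ C.1, f R) * ∑' c : {c : Fin n → Finset (Finset (Fin d → ℤ)) //
              IsChain' (C.1.sup id) c}, ∏ i, ∏ R ∈ c.1 i, f R := ENNReal.tsum_mul_left
        _ ≤ (∏ R ∈ C.1, f R) *
            (((2 : ℝ≥0∞)⁻¹) ^ n * ENNReal.ofReal (Real.exp (α * ∑ R ∈ C.1, (R.card : ℝ)))) := by
              exact mul_le_mul_right (ih C.1 C.2.1) _
        _ = _ := by ring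
    calc _ ≤ ∑' C : {C : Finset (Finset (Fin d → ℤ)) //
            Admissible C ∧ C.Nonempty ∧ ∀ R ∈ C, ¬ Disjoint R (P.sup id)},
          (∏ R ∈ C.1, f R) * ((2 : ℝ≥0∞)⁻¹) ^ n *
            ENNReal.ofReal (Real.exp (α * ∑ R ∈ C.1, (R.card : ℝ))) :=
          ENNReal.tsum_le_tsum step1
      _ = ((2 : ℝ≥0∞)⁻¹) ^ n * ∑' C : {C : Finset (Finset (Fin d → ℤ)) //
            Admissible C ∧ C.Nonempty ∧ ∀ R ∈ C, ¬ Disjoint R (P.sup id)},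
          ENNReal.ofReal (Real.exp (α * ∑ R ∈ C.1, (R.card : ℝ))) * ∏ R ∈ C.1, f R := by
          rw [← ENNReal.tsum_mul_left]
          exact tsum_congr fun C => by ring
      _ ≤ ((2 : ℝ≥0∞)⁻¹) ^ n *
          ((1 / 2) * ENNReal.ofReal (Real.exp (α * ∑ R ∈ P, (R.card : ℝ)))) :=
          mul_le_mul_right (hf P hP) _
      _ = ((2 : ℝ≥0∞)⁻¹) ^ (n+1) * ENNReal.ofReal (Real.exp (α * ∑ R ∈ P, (R.card : ℝ))) := by
          rw [pow_succ, one_div]; ring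

/-- Iterating the basic cluster-expansion estimate: if for every admissible
collection `P` one has `Σ_{∅ ≠ P' ∈ Conn(P)} e^{α‖P'‖} f^{P'} ≤ (1/2) e^{α‖P‖}`,
then the sum over chains of length `n` of `Πᵢ f^{Pᵢ}` is at most
`2^{−n} e^{α|Q|}`, and the series over `n` is bounded by `2 e^{α|Q|}`. -/
theorem stmt15 (d : ℕ) (α : ℝ) (hα : 0 < α) (f : Finset (Fin d → ℤ) → ℝ≥0∞)
    (hf : ∀ P : Finset (Finset (Fin d → ℤ)), Admissible P →
      ∑' C : {C : Finset (Finset (Fin d → ℤ)) //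
          Admissible C ∧ C.Nonempty ∧ ∀ R ∈ C, ¬ Disjoint R (P.sup id)},
          ENNReal.ofReal (Real.exp (α * ∑ R ∈ C.1, (R.card : ℝ))) *
            ∏ R ∈ C.1, f R ≤
        (1 / 2) * ENNReal.ofReal (Real.exp (α * ∑ R ∈ P, (R.card : ℝ))))
    (Q : Finset (Fin d → ℤ)) :
    (∀ n : ℕ,
      ∑' c : {c : Fin n → Finset (Finset (Fin d → ℤ)) // IsChain' Q c},
          ∏ i, ∏ R ∈ c.1 i, f R ≤
        ((2 : ℝ≥0∞)⁻¹) ^ n * ENNReal.ofReal (Real.exp (α * Q.card))) ∧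
    ∑' n : ℕ, ∑' c : {c : Fin n → Finset (Finset (Fin d → ℤ)) // IsChain' Q c},
        ∏ i, ∏ R ∈ c.1 i, f R ≤
      2 * ENNReal.ofReal (Real.exp (α * Q.card)) := by
  set P0 : Finset (Finset (Fin d → ℤ)) := Q.image (fun x => {x}) with hP0
  have hPadm : Admissible P0 := by
    constructor
    · intro R hR
      rcases Finset.mem_image.1 hR with ⟨x, _, rfl⟩
      exact Finset.singleton_nonempty x
    · intro R hR S hS hne
      rcases Finset.mem_image.1 hR with ⟨x, _, rfl⟩
      rcases Finset.mem_image.1 hS with ⟨y, _, rfl⟩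
      have : x ≠ y := fun h => hne (by rw [h])
      simp [Finset.disjoint_singleton, this, this.symm]
  have hsup : P0.sup id = Q := by
    ext a
    simp only [hP0, Finset.sup_image, Finset.mem_sup]
    constructor
    · rintro ⟨x, hx, ha⟩
      simp only [Function.comp, id] at ha
      rw [Finset.mem_singleton] at ha
      exact ha ▸ hx
    · intro ha
      exact ⟨a, ha, by simp [Function.comp]⟩
  have hsum : (∑ R ∈ P0, (R.card : ℝ)) = Q.card := by
    rw [hP0, Finset.sum_image (fun x _ y _ h => Finset.singleton_injective h)]
    simp
  have main : ∀ n : ℕ,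
      ∑' c : {c : Fin n → Finset (Finset (Fin d → ℤ)) // IsChain' Q c},
          ∏ i, ∏ R ∈ c.1 i, f R ≤
        ((2 : ℝ≥0∞)⁻¹) ^ n * ENNReal.ofReal (Real.exp (α * Q.card)) := by
    intro n
    have := key_lemma d α hα f hf n P0 hPadm
    rw [hsup, hsum] at this
    exact this
  refine ⟨main, ?_⟩
  calc _ ≤ ∑' n : ℕ, ((2 : ℝ≥0∞)⁻¹) ^ n * ENNReal.ofReal (Real.exp (α * Q.card)) :=
        ENNReal.tsum_le_tsum main
    _ = (∑' n : ℕ, ((2 : ℝ≥0∞)⁻¹) ^ n) * ENNReal.ofReal (Real.exp (α * Q.card)) :=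
        ENNReal.tsum_mul_right
    _ = 2 * ENNReal.ofReal (Real.exp (α * Q.card)) := by
        rw [ENNReal.tsum_geometric, ENNReal.one_sub_inv_two, inv_inv]
end
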